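/- arXiv:2205.14765 — 3 statements merged into one kernel-verified Lean document; each statement's English description precedes it below -/
import Mathlib

section
/- Let 0 < ε < 1/2 and let g ∈ C¹((0,∞)) be positive with g(t) ≥ c₀ > 0 and g(t) ≤ c₂⟨t⟩^ε for all t > 0, and suppose that lim_{t→∞} (g(t) − 2t g′(t))/g(t) = c_g for some constant c_g ∈ (0,1). Let T(t) := ∫₀^t g(u)^{-2} du. Then lim_{t→∞} T(t)·g(t)²/t = 1/c_g. Consequently, setting c_g′ := 1/c_g − 1 > 0, there exists t_M > 0 such that T(t)·g(t)² − t ≥ (c_g′/2)·t for all t ≥ t_M. -/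
open MeasureTheory Filter
set_option maxHeartbeats 1000000

/-- For `g ∈ C¹((0,∞))` positive with `g t ≥ c₀ > 0`, `g t ≤ c₂⟨t⟩^ε`
(`0 < ε < 1/2`), and `(g t - 2t g' t)/g t → c_g ∈ (0,1)`, setting
`T t = ∫₀ᵗ g(u)⁻² du`, one has `T(t) g(t)²/t → 1/c_g`, and hence, with
`c_g' = 1/c_g - 1 > 0`, `T(t) g(t)² - t ≥ (c_g'/2) t` for all large `t`. -/
theorem stmt2 (ε c₀ c₂ c_g : ℝ) (hε : 0 < ε) (hε' : ε < 1/2)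
    (hc₀ : 0 < c₀) (hcg : 0 < c_g) (hcg' : c_g < 1)
    (g g' : ℝ → ℝ)
    (hgd : ∀ t > 0, HasDerivAt g (g' t) t)
    (hg'c : ContinuousOn g' (Set.Ioi (0:ℝ)))
    (hglb : ∀ t > 0, c₀ ≤ g t)
    (hgub : ∀ t > 0, g t ≤ c₂ * Real.sqrt (1 + t^2) ^ ε)
    (hlim : Tendsto (fun t => (g t - 2*t*g' t) / g t) atTop (nhds c_g))
    (T : ℝ → ℝ) (hT : ∀ t, T t = ∫ u in (0:ℝ)..t, (g u ^ 2)⁻¹) :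
    Tendsto (fun t => T t * (g t)^2 / t) atTop (nhds (1/c_g)) ∧
    ∃ t_M > 0, ∀ t ≥ t_M, (1/c_g - 1)/2 * t ≤ T t * (g t)^2 - t := by
  have gpos : ∀ t > 0, 0 < g t := fun t ht => lt_of_lt_of_le hc₀ (hglb t ht)
  have gcont : ContinuousOn g (Set.Ioi 0) :=
    fun t ht => ((hgd t ht).continuousAt).continuousWithinAt
  set L := 1/c_g with hLdef
  have hc₂ : 0 < c₂ := by
    have h1 := hglb 1 one_pos
    have h2 := hgub 1 one_pos
    have hp : (0:ℝ) < Real.sqrt (1+1^2) ^ ε :=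
      Real.rpow_pos_of_pos (Real.sqrt_pos.2 (by norm_num)) _
    nlinarith
  have fcont : ContinuousOn (fun u => (g u ^ 2)⁻¹) (Set.Ioi 0) :=
    (gcont.pow 2).inv₀ (fun t ht => pow_ne_zero 2 (gpos t ht).ne')
  have hψcont : ContinuousOn (fun u => (g u - 2*u*g' u) / g u ^ 3) (Set.Ioi 0) := by
    refine ((gcont.sub ((continuousOn_const.mul continuousOn_id).mul hg'c)).div
      (gcont.pow 3) ?_)
    exact fun t ht => pow_ne_zero 3 (gpos t ht).ne'
  -- φ tends to atTop
  have hφtop : Tendsto (fun t => t / g t ^ 2) atTop atTop := by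
    have h1 : Tendsto (fun t : ℝ => t ^ (1 - 2*ε)) atTop atTop :=
      tendsto_rpow_atTop (by linarith)
    refine tendsto_atTop_mono' atTop ?_
      (h1.const_mul_atTop (r := (c₂ ^ 2 * Real.sqrt 2 ^ (2*ε))⁻¹) (by positivity))
    filter_upwards [eventually_ge_atTop (1:ℝ)] with t ht1
    have ht : 0 < t := lt_of_lt_of_le one_pos ht1
    have hsqrt : Real.sqrt (1 + t^2) ≤ Real.sqrt 2 * t := by
      rw [show Real.sqrt 2 * t = Real.sqrt (2 * t^2) by
        rw [Real.sqrt_mul (by norm_num), Real.sqrt_sq ht.le]]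
      exact Real.sqrt_le_sqrt (by nlinarith)
    have hub : g t ≤ c₂ * (Real.sqrt 2 ^ ε * t ^ ε) := by
      calc g t ≤ c₂ * Real.sqrt (1 + t^2) ^ ε := hgub t ht
        _ ≤ c₂ * (Real.sqrt 2 * t) ^ ε := by gcongr
        _ = c₂ * (Real.sqrt 2 ^ ε * t ^ ε) := by
            rw [Real.mul_rpow (Real.sqrt_nonneg _) ht.le]
    have hg2 : g t ^ 2 ≤ c₂ ^ 2 * Real.sqrt 2 ^ (2*ε) * t ^ (2*ε) := by
      have h0 : 0 ≤ g t := (gpos t ht).le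
      calc g t ^ 2 ≤ (c₂ * (Real.sqrt 2 ^ ε * t ^ ε)) ^ 2 := pow_le_pow_left₀ h0 hub 2
        _ = c₂ ^ 2 * Real.sqrt 2 ^ (2*ε) * t ^ (2*ε) := by
            rw [mul_pow, mul_pow, ← Real.rpow_natCast (Real.sqrt 2 ^ ε) 2,
              ← Real.rpow_natCast (t ^ ε) 2,
              ← Real.rpow_mul (Real.sqrt_nonneg _), ← Real.rpow_mul ht.le]
            norm_num [mul_comm ε 2]
            ring
    have hgt2 : 0 < g t ^ 2 := pow_pos (gpos t ht) 2
    have key : (c₂ ^ 2 * Real.sqrt 2 ^ (2*ε))⁻¹ * t ^ (1 - 2*ε)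
        = t / (c₂ ^ 2 * Real.sqrt 2 ^ (2*ε) * t ^ (2*ε)) := by
      rw [Real.rpow_sub ht, Real.rpow_one]
      field_simp
    rw [key]
    exact div_le_div_of_nonneg_left ht.le hgt2 hg2
  -- derivative of φ
  have hφd : ∀ t > 0, HasDerivAt (fun s => s / g s ^ 2)
      ((g t - 2*t*g' t) / g t ^ 3) t := by
    intro t ht
    have hgt := (gpos t ht).ne'
    have h1 : HasDerivAt (fun s => g s ^ 2) (2 * g t ^ 1 * g' t) t := (hgd t ht).pow 2
    have h2 := (hasDerivAt_id t).div h1 (pow_ne_zero 2 hgt)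
    refine h2.congr_deriv ?_
    rw [id_eq]
    field_simp
  -- main limit
  have main : Tendsto (fun t => T t / (t / g t ^ 2)) atTop (nhds L) := by
    rw [Metric.tendsto_atTop]
    intro e he
    have hδ : 0 < e/3 := by positivity
    set δ := e/3 with hδdef
    have hev : ∀ᶠ u in atTop, 0 < u ∧ 0 < g u - 2*u*g' u ∧
        |g u / (g u - 2*u*g' u) - L| < δ := by
      have e2 : ∀ᶠ u in atTop, c_g/2 < (g u - 2*u*g' u)/g u :=
        hlim.eventually (lt_mem_nhds (by linarith))
      have e3 : ∀ᶠ u in atTop, |((g u - 2*u*g' u)/g u)⁻¹ - c_g⁻¹| < δ := by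
        have := Metric.tendsto_nhds.1 (hlim.inv₀ hcg.ne') δ hδ
        simpa [Real.dist_eq] using this
      filter_upwards [eventually_gt_atTop (0:ℝ), e2, e3] with u hu1 hu2 hu3
      have hgu := gpos u hu1
      have hnum : 0 < g u - 2*u*g' u := by
        have h4 : c_g/2 * g u < g u - 2*u*g' u := (lt_div_iff₀ hgu).1 hu2
        nlinarith
      refine ⟨hu1, hnum, ?_⟩
      rw [inv_div] at hu3
      simpa [hLdef, one_div] using hu3
    obtain ⟨a₀, ha₀⟩ := eventually_atTop.1 hev
    set t₁ := max a₀ 1 with ht₁def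
    have ht₁pos : (0:ℝ) < t₁ := lt_of_lt_of_le one_pos (le_max_right _ _)
    have hprop : ∀ u ≥ t₁, 0 < u ∧ 0 < g u - 2*u*g' u ∧
        |g u / (g u - 2*u*g' u) - L| < δ :=
      fun u hu => ha₀ u (le_trans (le_max_left _ _) hu)
    -- integrability on [0, t₁]
    have hint0 : IntervalIntegrable (fun u => (g u ^ 2)⁻¹) volume 0 t₁ := by
      rw [intervalIntegrable_iff_integrableOn_Ioc_of_le ht₁pos.le]
      refine ⟨(fcont.mono (fun x hx => hx.1)).aestronglyMeasurable measurableSet_Ioc, ?_⟩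
      apply HasFiniteIntegral.restrict_of_bounded (C := (c₀^2)⁻¹) measure_Ioc_lt_top
      rw [ae_restrict_iff' measurableSet_Ioc]
      filter_upwards with x hx
      have hgx := hglb x hx.1
      have hgx2 : c₀^2 ≤ g x ^ 2 := by nlinarith
      rw [Real.norm_eq_abs, abs_of_nonneg (by positivity)]
      exact inv_anti₀ (by positivity) hgx2
    set C := |T t₁ - L * (t₁ / g t₁ ^ 2)| with hCdef
    have hC0 : 0 ≤ C := abs_nonneg _
    obtain ⟨b₀, hb₀⟩ := eventually_atTop.1 (Tendsto.eventually_ge_atTop hφtop ((C+1)/δ))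
    refine ⟨max t₁ b₀, fun t htN => ?_⟩
    have htt₁ : t₁ ≤ t := le_trans (le_max_left _ _) htN
    have htpos : 0 < t := lt_of_lt_of_le ht₁pos htt₁
    have hφt_lb : (C+1)/δ ≤ t / g t ^ 2 := hb₀ t (le_trans (le_max_right _ _) htN)
    have hφt_pos : 0 < t / g t ^ 2 := div_pos htpos (pow_pos (gpos t htpos) 2)
    have hφt₁_pos : 0 < t₁ / g t₁ ^ 2 := div_pos ht₁pos (pow_pos (gpos t₁ ht₁pos) 2)
    -- integrability on [t₁, t]
    have hIccsub : Set.Icc t₁ t ⊆ Set.Ioi 0 := fun x hx => lt_of_lt_of_le ht₁pos hx.1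
    have huIcc : Set.uIcc t₁ t = Set.Icc t₁ t := Set.uIcc_of_le htt₁
    have hintf : IntervalIntegrable (fun u => (g u ^ 2)⁻¹) volume t₁ t := by
      apply ContinuousOn.intervalIntegrable
      rw [huIcc]; exact fcont.mono hIccsub
    have hintψ : IntervalIntegrable (fun u => (g u - 2*u*g' u) / g u ^ 3) volume t₁ t := by
      apply ContinuousOn.intervalIntegrable
      rw [huIcc]; exact hψcont.mono hIccsub
    have hFTC : ∫ u in t₁..t, (g u - 2*u*g' u) / g u ^ 3
        = t / g t ^ 2 - t₁ / g t₁ ^ 2 := by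
      apply intervalIntegral.integral_eq_sub_of_hasDerivAt
      · intro u hu
        rw [huIcc] at hu
        exact hφd u (hIccsub hu)
      · exact hintψ
    have hsplit : T t = T t₁ + ∫ u in t₁..t, (g u ^ 2)⁻¹ := by
      rw [hT t, hT t₁, intervalIntegral.integral_add_adjacent_intervals hint0 hintf]
    -- pointwise bounds
    have hpt : ∀ u ∈ Set.Icc t₁ t,
        (L - δ) * ((g u - 2*u*g' u) / g u ^ 3) ≤ (g u ^ 2)⁻¹ ∧
        (g u ^ 2)⁻¹ ≤ (L + δ) * ((g u - 2*u*g' u) / g u ^ 3) := by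
      intro u hu
      obtain ⟨hu0, hnum, hratio⟩ := hprop u hu.1
      have hgu := gpos u hu0
      have hψpos : 0 < (g u - 2*u*g' u) / g u ^ 3 := div_pos hnum (by positivity)
      have hid : (g u ^ 2)⁻¹ = (g u / (g u - 2*u*g' u)) * ((g u - 2*u*g' u) / g u ^ 3) := by
        field_simp
      obtain ⟨hr1, hr2⟩ := abs_lt.1 hratio
      constructor
      · rw [hid]; nlinarith
      · rw [hid]; nlinarith
    have hlow : (L - δ) * (t / g t ^ 2 - t₁ / g t₁ ^ 2) ≤ ∫ u in t₁..t, (g u ^ 2)⁻¹ := by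
      rw [← hFTC, ← intervalIntegral.integral_const_mul]
      exact intervalIntegral.integral_mono_on htt₁ (hintψ.const_mul _) hintf
        (fun u hu => (hpt u hu).1)
    have hupp : (∫ u in t₁..t, (g u ^ 2)⁻¹) ≤ (L + δ) * (t / g t ^ 2 - t₁ / g t₁ ^ 2) := by
      rw [← hFTC, ← intervalIntegral.integral_const_mul]
      exact intervalIntegral.integral_mono_on htt₁ hintf (hintψ.const_mul _)
        (fun u hu => (hpt u hu).2)
    have hΔ0 : 0 ≤ t / g t ^ 2 - t₁ / g t₁ ^ 2 := by
      rw [← hFTC]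
      apply intervalIntegral.integral_nonneg htt₁
      intro u hu
      obtain ⟨hu0, hnum, _⟩ := hprop u hu.1
      exact le_of_lt (div_pos hnum (pow_pos (gpos u hu0) 3))
    -- assemble
    have habs : |T t - L * (t / g t ^ 2)| ≤ C + δ * (t / g t ^ 2) := by
      have h1 : -C ≤ T t₁ - L * (t₁ / g t₁ ^ 2) := neg_abs_le _
      have h2 : T t₁ - L * (t₁ / g t₁ ^ 2) ≤ C := le_abs_self _
      have hΔub : t / g t ^ 2 - t₁ / g t₁ ^ 2 ≤ t / g t ^ 2 := by linarith
      have hδΔ : δ * (t / g t ^ 2 - t₁ / g t₁ ^ 2) ≤ δ * (t / g t ^ 2) :=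
        mul_le_mul_of_nonneg_left hΔub hδ.le
      have he1 : (L - δ) * (t / g t ^ 2 - t₁ / g t₁ ^ 2)
          = L * (t / g t ^ 2) - L * (t₁ / g t₁ ^ 2)
            - δ * (t / g t ^ 2 - t₁ / g t₁ ^ 2) := by ring
      have he2 : (L + δ) * (t / g t ^ 2 - t₁ / g t₁ ^ 2)
          = L * (t / g t ^ 2) - L * (t₁ / g t₁ ^ 2)
            + δ * (t / g t ^ 2 - t₁ / g t₁ ^ 2) := by ring
      rw [abs_le]
      constructor
      · linarith [hsplit, hlow]
      · linarith [hsplit, hupp]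
    have hCsmall : C / (t / g t ^ 2) < δ := by
      rw [div_lt_iff₀ hφt_pos]
      have h5 : δ * ((C+1)/δ) ≤ δ * (t / g t ^ 2) :=
        mul_le_mul_of_nonneg_left hφt_lb hδ.le
      rw [mul_div_cancel₀ _ hδ.ne'] at h5
      linarith
    have heq : T t / (t / g t ^ 2) - L = (T t - L * (t / g t ^ 2)) / (t / g t ^ 2) := by
      field_simp [(gpos t htpos).ne', htpos.ne']
    rw [Real.dist_eq, heq, abs_div, abs_of_pos hφt_pos]
    calc |T t - L * (t / g t ^ 2)| / (t / g t ^ 2)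
        ≤ (C + δ * (t / g t ^ 2)) / (t / g t ^ 2) :=
          div_le_div_of_nonneg_right habs hφt_pos.le
      _ = C / (t / g t ^ 2) + δ := by
          rw [add_div, mul_div_cancel_right₀ _ hφt_pos.ne']
      _ < δ + δ := by linarith
      _ < e := by rw [hδdef]; linarith
  -- first conclusion
  have hconc1 : Tendsto (fun t => T t * g t ^ 2 / t) atTop (nhds L) := by
    have heq : (fun t => T t * g t ^ 2 / t) = fun t => T t / (t / g t ^ 2) := by
      funext t
      rw [div_div_eq_mul_div]
    rw [heq]
    exact main
  refine ⟨hconc1, ?_⟩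
  -- second conclusion
  have hL1 : 1 < L := by rw [hLdef, lt_div_iff₀ hcg]; linarith
  have hc' : 0 < (L - 1)/2 := by linarith
  have hev2 := Metric.tendsto_nhds.1 hconc1 ((L-1)/2) hc'
  obtain ⟨a, ha⟩ := eventually_atTop.1 (hev2.and (eventually_ge_atTop (1:ℝ)))
  refine ⟨max a 1, lt_of_lt_of_le one_pos (le_max_right _ _), fun t ht => ?_⟩
  obtain ⟨hdist, ht1⟩ := ha t (le_trans (le_max_left _ _) ht)
  have htpos : 0 < t := lt_of_lt_of_le one_pos ht1
  rw [Real.dist_eq] at hdist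
  have hX : 1 + (L-1)/2 ≤ T t * g t ^ 2 / t := by
    have := (abs_lt.1 hdist).1
    linarith
  have hmul : T t * g t ^ 2 / t * t = T t * g t ^ 2 := div_mul_cancel₀ _ htpos.ne'
  nlinarith [mul_le_mul_of_nonneg_right hX htpos.le]
end

section
/- Let n ≥ 5 and ε ∈ (2/n, 1/2), and let g : ℝ → ℝ be continuous with c₁⟨t⟩^ε ≤ g(t) ≤ c₂⟨t⟩^ε for all t ≥ 0, for some 0 < c₁ ≤ c₂. Let T(t) := ∫₀^t g(u)^{-2} du and let T⁻¹ be its inverse on [0,∞). Then (n/2 − 2)·ε/(1 − 2ε) > 1, there exists c > 0 such that g(T⁻¹(u)) ≥ c·u^{ε/(1−2ε)} for all u ≥ 1, and consequently the function u ↦ g(T⁻¹(u))^{−(n/2−2)} is integrable on [1, ∞). -/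
open MeasureTheory Filter

/-- For `n ≥ 5`, `ε ∈ (2/n, 1/2)` and `g` continuous with
`c₁⟨t⟩^ε ≤ g t ≤ c₂⟨t⟩^ε` for `t ≥ 0`, with `T t = ∫₀ᵗ g(u)⁻² du` and `T⁻¹` its
inverse on `[0,∞)`: one has `(n/2-2)ε/(1-2ε) > 1`, the lower bound
`g(T⁻¹ u) ≥ c u^{ε/(1-2ε)}` for `u ≥ 1`, and `u ↦ g(T⁻¹ u)^{-(n/2-2)}` is
integrable on `[1,∞)`. -/
theorem stmt5 (n : ℕ) (hn : 5 ≤ n) (ε c₁ c₂ : ℝ)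
    (hε : 2/(n:ℝ) < ε) (hε' : ε < 1/2) (hc₁ : 0 < c₁) (hc : c₁ ≤ c₂)
    (g : ℝ → ℝ) (hgcont : Continuous g) (hgpos : ∀ t, 0 < g t)
    (hglb : ∀ t ≥ 0, c₁ * Real.sqrt (1 + t^2) ^ ε ≤ g t)
    (hgub : ∀ t ≥ 0, g t ≤ c₂ * Real.sqrt (1 + t^2) ^ ε)
    (T : ℝ → ℝ) (hT : ∀ t, T t = ∫ u in (0:ℝ)..t, (g u ^ 2)⁻¹)
    (Tinv : ℝ → ℝ) (hTinv : ∀ t ≥ 0, Tinv (T t) = t)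
    (hTinv' : ∀ s ≥ 0, 0 ≤ Tinv s ∧ T (Tinv s) = s) :
    1 < ((n:ℝ)/2 - 2) * ε / (1 - 2*ε) ∧
    (∃ c > 0, ∀ u ≥ 1, c * u ^ (ε/(1-2*ε)) ≤ g (Tinv u)) ∧
    IntegrableOn (fun u => g (Tinv u) ^ (-((n:ℝ)/2 - 2))) (Set.Ici (1:ℝ)) := by
  have hn0 : (0:ℝ) < n := by
    have : (0:ℕ) < n := by omega
    exact_mod_cast this
  have hn5 : (5:ℝ) ≤ n := by exact_mod_cast hn
  have hε0 : 0 < ε := lt_trans (by positivity) hε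
  have h2ε : 0 < 1 - 2*ε := by linarith
  have h2n : 2 < ε * n := by rwa [div_lt_iff₀ hn0] at hε
  have part1 : 1 < ((n:ℝ)/2 - 2) * ε / (1 - 2*ε) := by
    rw [lt_div_iff₀ h2ε]; nlinarith
  -- integrand continuous
  have hcont2 : Continuous (fun u => (g u ^ 2)⁻¹) :=
    (hgcont.pow 2).inv₀ (fun u => pow_ne_zero 2 (hgpos u).ne')
  have hi : ∀ x y : ℝ, IntervalIntegrable (fun u => (g u ^ 2)⁻¹) volume x y :=
    fun x y => hcont2.intervalIntegrable x y
  set A : ℝ := c₁⁻¹^2 / (1 - 2*ε) with hA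
  have hApos : 0 < A := by positivity
  set q : ℝ := ε / (1 - 2*ε) with hq
  have hqpos : 0 < q := by positivity
  -- upper bound on T
  have hTub : ∀ t ≥ 0, T t ≤ A * t ^ (1 - 2*ε) := by
    intro t ht
    have hint2 : IntervalIntegrable (fun u => c₁⁻¹^2 * u ^ (-(2*ε))) volume 0 t :=
      (intervalIntegral.intervalIntegrable_rpow' (by linarith)).const_mul _
    have h0 : ∀ᵐ (u : ℝ), u ≠ 0 := by
      refine ae_iff.mpr ?_
      have : {u : ℝ | ¬ u ≠ 0} = {0} := by ext u; simp
      rw [this]; exact measure_singleton 0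
    have hcomp : (fun u => (g u ^ 2)⁻¹) ≤ᵐ[volume.restrict (Set.Icc 0 t)]
        fun u => c₁⁻¹^2 * u ^ (-(2*ε)) := by
      filter_upwards [ae_restrict_mem measurableSet_Icc, ae_restrict_of_ae h0] with u hu hu0
      have hu' : 0 < u := lt_of_le_of_ne hu.1 (Ne.symm hu0)
      have hle : c₁ * u ^ ε ≤ g u := by
        refine le_trans ?_ (hglb u hu.1)
        have hsq : u ≤ Real.sqrt (1 + u^2) := by
          nlinarith [Real.sq_sqrt (show (0:ℝ) ≤ 1 + u^2 by positivity),
            Real.sqrt_nonneg (1 + u^2)]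
        exact mul_le_mul_of_nonneg_left (Real.rpow_le_rpow hu'.le hsq hε0.le) hc₁.le
      have hpos : 0 < c₁ * u ^ ε := by positivity
      have hsqle : (c₁ * u ^ ε)^2 ≤ g u ^ 2 := by nlinarith
      have h1 : (g u ^ 2)⁻¹ ≤ ((c₁ * u ^ ε)^2)⁻¹ :=
        inv_anti₀ (by positivity) hsqle
      refine h1.trans_eq ?_
      rw [mul_pow, mul_inv, ← inv_pow, ← Real.rpow_natCast (u ^ ε) 2,
        ← Real.rpow_mul hu'.le, Real.rpow_neg hu'.le (2*ε)]
      norm_num [mul_comm]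
    have hmono := intervalIntegral.integral_mono_ae_restrict ht (hi 0 t) hint2 hcomp
    have hval : (∫ u in (0:ℝ)..t, c₁⁻¹^2 * u ^ (-(2*ε))) = A * t ^ (1 - 2*ε) := by
      rw [intervalIntegral.integral_const_mul, integral_rpow (Or.inl (by linarith))]
      rw [Real.zero_rpow (by linarith : -(2*ε) + 1 ≠ 0)]
      rw [hA]
      rw [show -(2*ε) + 1 = 1 - 2*ε by ring]
      ring
    rw [hT]; rw [hval] at hmono; exact hmono
  -- lower bound on g ∘ Tinv
  set c : ℝ := c₁ / A ^ q with hcdef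
  have hcpos : 0 < c := by positivity
  have part2 : ∀ u ≥ (1:ℝ), c * u ^ q ≤ g (Tinv u) := by
    intro u hu
    have hu0 : (0:ℝ) ≤ u := by linarith
    obtain ⟨ht0, hTt⟩ := hTinv' u hu0
    set t := Tinv u
    have hub := hTub t ht0
    rw [hTt] at hub
    -- u / A ≤ t ^ (1-2ε)
    have h1 : u / A ≤ t ^ (1 - 2*ε) := by
      rw [div_le_iff₀ hApos]; linarith [hub]
    have huA : 0 ≤ u / A := by positivity
    have h2 : (u / A) ^ (1/(1-2*ε)) ≤ t := by
      have := Real.rpow_le_rpow huA h1 (by positivity : (0:ℝ) ≤ 1/(1-2*ε))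
      rwa [← Real.rpow_mul ht0, mul_one_div, div_self h2ε.ne', Real.rpow_one] at this
    -- t ^ ε ≥ (u/A) ^ q
    have h3 : (u / A) ^ q ≤ t ^ ε := by
      have := Real.rpow_le_rpow (Real.rpow_nonneg huA _) h2 hε0.le
      rw [hq]
      rwa [← Real.rpow_mul huA, one_div, inv_mul_eq_div] at this
    have hsq : t ≤ Real.sqrt (1 + t^2) := by
      nlinarith [Real.sq_sqrt (show (0:ℝ) ≤ 1 + t^2 by positivity),
        Real.sqrt_nonneg (1 + t^2)]
    have h4 : t ^ ε ≤ Real.sqrt (1 + t^2) ^ ε := Real.rpow_le_rpow ht0 hsq hε0.le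
    have h5 := hglb t ht0
    have : c₁ * (u / A) ^ q ≤ g t := by
      have := mul_le_mul_of_nonneg_left (h3.trans h4) hc₁.le
      linarith
    rw [Real.div_rpow hu0 hApos.le] at this
    rw [hcdef]
    calc c₁ / A ^ q * u ^ q = c₁ * (u ^ q / A ^ q) := by ring
    _ ≤ g t := this
  refine ⟨part1, ⟨c, hcpos, part2⟩, ?_⟩
  -- Part 3: integrability
  set m : ℝ := (n:ℝ)/2 - 2 with hm
  have hmpos : 0 < m := by rw [hm]; linarith
  -- T strictly monotone on [0,∞)
  have hTmono : StrictMonoOn T (Set.Ici 0) := by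
    intro a _ b _ hab
    have key : T b - T a = ∫ u in a..b, (g u ^ 2)⁻¹ := by
      rw [hT, hT, ← intervalIntegral.integral_add_adjacent_intervals (hi 0 a) (hi a b)]
      ring
    have hpos : 0 < ∫ u in a..b, (g u ^ 2)⁻¹ :=
      intervalIntegral.intervalIntegral_pos_of_pos_on (hi a b)
        (fun x _ => inv_pos.mpr (pow_pos (hgpos x) 2)) hab
    linarith
  have hTinvmono : MonotoneOn Tinv (Set.Ici 1) := by
    intro a ha b hb hab
    have ha0 : (0:ℝ) ≤ a := le_trans zero_le_one ha
    have hb0 : (0:ℝ) ≤ b := le_trans zero_le_one hb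
    by_contra hcon
    push_neg at hcon
    have := hTmono (hTinv' b hb0).1 (hTinv' a ha0).1 hcon
    rw [(hTinv' b hb0).2, (hTinv' a ha0).2] at this
    linarith
  have hmeasTinv : AEMeasurable Tinv (volume.restrict (Set.Ici 1)) :=
    aemeasurable_restrict_of_monotoneOn measurableSet_Ici hTinvmono
  have hcontout : Continuous (fun t => g t ^ (-m)) :=
    hgcont.rpow_const (fun x => Or.inl (hgpos x).ne')
  have hmeasf : AEStronglyMeasurable (fun u => g (Tinv u) ^ (-m))
      (volume.restrict (Set.Ici 1)) :=
    (hcontout.measurable.comp_aemeasurable hmeasTinv).aestronglyMeasurable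
  have hexp : q * (-m) < -1 := by
    have : 1 < m * q := by
      rw [hq]; calc (1:ℝ) < m * ε / (1 - 2*ε) := part1
      _ = m * (ε / (1 - 2*ε)) := by ring
    nlinarith
  have hG : IntegrableOn (fun u : ℝ => c ^ (-m) * u ^ (q * (-m))) (Set.Ici 1) := by
    rw [integrableOn_Ici_iff_integrableOn_Ioi]
    exact (integrableOn_Ioi_rpow_of_lt hexp one_pos).const_mul _
  refine Integrable.mono' hG hmeasf ?_
  filter_upwards [ae_restrict_mem measurableSet_Ici] with u hu
  have hu1 : (1:ℝ) ≤ u := hu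
  have hu0 : (0:ℝ) < u := lt_of_lt_of_le one_pos hu1
  have hb := part2 u hu1
  have hbpos : 0 < c * u ^ q := by positivity
  have h6 : g (Tinv u) ^ (-m) ≤ (c * u ^ q) ^ (-m) :=
    Real.rpow_le_rpow_of_nonpos hbpos hb (by linarith)
  have h7 : (c * u ^ q) ^ (-m) = c ^ (-m) * u ^ (q * (-m)) := by
    rw [Real.mul_rpow hcpos.le (Real.rpow_nonneg hu0.le _), ← Real.rpow_mul hu0.le]
  rw [Real.norm_eq_abs, abs_of_nonneg (Real.rpow_nonneg (hgpos _).le _)]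
  rw [← h7]; exact h6
end

section
/- Let n ≥ 2 and let f : ℝⁿ → ℂ be a C¹ radial function (i.e. f(x) depends only on |x|) with compact support. Then there is a constant C_n > 0, depending only on n, such that for every x ≠ 0: |f(x)|² ≤ C_n |x|^{−(n−1)} ‖f‖_{L²(ℝⁿ)} ‖∇f‖_{L²(ℝⁿ)}. In particular, if ‖f‖_{L²} and ‖∇f‖_{L²} are both at most R, then |f(x)| ≤ √(C_n) · R · |x|^{−(n−1)/2} for |x| ≥ 1. -/
open MeasureTheory Set

set_option maxHeartbeats 1000000

lemma aux_fderiv_le {E : Type*} [NormedAddCommGroup E] [InnerProductSpace ℝ E]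
    [CompleteSpace E] (f : E → ℂ)
    (hrad : ∀ x y : E, ‖x‖ = ‖y‖ → f x = f y) {a b : E} (hab : ‖a‖ = ‖b‖) :
    ‖fderiv ℝ f a‖ ≤ ‖fderiv ℝ f b‖ := by
  set L := Submodule.reflection (ℝ ∙ (a - b))ᗮ with hL
  have hLa : L a = b := Submodule.reflection_sub hab
  have hcomp : f ∘ L.toContinuousLinearEquiv = f := by
    funext z
    exact hrad _ _ (by simp [L.norm_map])
  have h1 : fderiv ℝ f a = (fderiv ℝ f (L a)).comp
      (L.toContinuousLinearEquiv : E →L[ℝ] E) := by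
    conv_lhs => rw [← hcomp]
    rw [L.toContinuousLinearEquiv.comp_right_fderiv]
    simp
  rw [h1, hLa]
  refine ContinuousLinearMap.opNorm_le_bound _ (norm_nonneg _) fun v => ?_
  calc ‖fderiv ℝ f b (L.toContinuousLinearEquiv v)‖
      ≤ ‖fderiv ℝ f b‖ * ‖L.toContinuousLinearEquiv v‖ :=
        ContinuousLinearMap.le_opNorm _ _
    _ = ‖fderiv ℝ f b‖ * ‖v‖ := by simp

lemma aux_oneD {m : ℕ} (u : ℝ → ℂ) (w : ℝ → ℝ) (hwpos : ∀ t, 0 ≤ w t)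
    (hu : ContDiff ℝ 1 u) (hu2 : HasCompactSupport u)
    (u' : ℝ → ℂ) (hu' : ∀ t, HasDerivAt u (u' t) t) (hu'w : ∀ t, ‖u' t‖ ≤ w t)
    (hwc : Continuous w) (hw2 : HasCompactSupport w)
    {r : ℝ} (hr : 0 < r) :
    r ^ m * ‖u r‖ ^ 2 ≤
      2 * ((∫ t in Ioi (0:ℝ), t ^ m * ‖u t‖ ^ 2) ^ ((1:ℝ)/2) *
        (∫ t in Ioi (0:ℝ), t ^ m * w t ^ 2) ^ ((1:ℝ)/2)) := by
  set a : ℝ → ℝ := fun t => Real.sqrt (t ^ m) * ‖u t‖ with ha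
  set b : ℝ → ℝ := fun t => Real.sqrt (t ^ m) * w t with hb
  have hac : Continuous a := (Real.continuous_sqrt.comp (continuous_pow m)).mul hu.continuous.norm
  have hbc : Continuous b := (Real.continuous_sqrt.comp (continuous_pow m)).mul hwc
  have ha2 : HasCompactSupport a := hu2.norm.mul_left
  have hb2 : HasCompactSupport b := hw2.mul_left
  set F : ℝ → ℝ := fun t => t ^ m * ‖u t‖ ^ 2 with hF
  have hFc : ContDiff ℝ 1 F := (contDiff_id.pow m).mul (hu.norm_sq ℝ)
  have hq2 : HasCompactSupport (fun t => ‖u t‖ ^ 2) :=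
    hu2.comp_left (g := fun z : ℂ => ‖z‖ ^ 2) (by simp)
  have hF2 : HasCompactSupport F := hq2.mul_left
  have hFder : ∀ t, HasDerivAt F
      ((m * t ^ (m - 1)) * ‖u t‖ ^ 2 + t ^ m * (2 * (inner ℝ (u t) (u' t) : ℝ))) t :=
    fun t => (hasDerivAt_pow m t).mul ((hu' t).norm_sq)
  have hFTC : ∫ t in Ioi r, deriv F t = - F r :=
    hF2.integral_Ioi_deriv_eq hFc r
  have hkey : F r ≤ ∫ t in Ioi r, 2 * (a t * b t) := by
    have h1 : F r = ∫ t in Ioi r, -(deriv F t) := by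
      rw [integral_neg, hFTC, neg_neg]
    rw [h1]
    refine setIntegral_mono_on ?_ ?_ measurableSet_Ioi ?_
    · exact ((hFc.continuous_deriv le_rfl).integrable_of_hasCompactSupport
        hF2.deriv).neg.integrableOn
    · have hcs : HasCompactSupport (fun t => 2 * (a t * b t)) := by
        refine ha2.mono fun t ht => ?_
        simp only [Function.mem_support] at ht ⊢
        intro h; apply ht; simp [h]
      exact ((continuous_const.mul (hac.mul hbc)).integrable_of_hasCompactSupport
        hcs).integrableOn
    · intro t ht
      have ht0 : 0 < t := lt_trans hr ht
      rw [(hFder t).deriv]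
      have h2 : |(2 * (inner ℝ (u t) (u' t) : ℝ))| ≤ 2 * (‖u t‖ * ‖u' t‖) := by
        rw [abs_mul, abs_two]
        exact mul_le_mul_of_nonneg_left (abs_real_inner_le_norm _ _) (by norm_num)
      have h3 : Real.sqrt (t ^ m) * Real.sqrt (t ^ m) = t ^ m :=
        Real.mul_self_sqrt (pow_nonneg ht0.le m)
      have h4 : ‖u' t‖ ≤ w t := hu'w t
      have h5 : (0:ℝ) ≤ m * t ^ (m - 1) * ‖u t‖ ^ 2 := by positivity
      have h6 : (0:ℝ) ≤ t ^ m := pow_nonneg ht0.le m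
      have h9 : 0 ≤ ‖u t‖ := norm_nonneg _
      have hchain : -(2 * (inner ℝ (u t) (u' t) : ℝ)) ≤ 2 * (‖u t‖ * w t) :=
        le_trans (neg_le_abs _) (le_trans h2
          (mul_le_mul_of_nonneg_left (mul_le_mul_of_nonneg_left h4 h9) (by norm_num)))
      have hmul := mul_le_mul_of_nonneg_left hchain h6
      rw [mul_neg] at hmul
      have hRHS : a t * b t = t ^ m * (‖u t‖ * w t) := by
        simp only [ha, hb]
        calc Real.sqrt (t^m) * ‖u t‖ * (Real.sqrt (t^m) * w t)
            = Real.sqrt (t^m) * Real.sqrt (t^m) * (‖u t‖ * w t) := by ring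
          _ = t ^ m * (‖u t‖ * w t) := by rw [h3]
      rw [hRHS]
      linarith [hmul, h5]
  have hCS : ∫ t in Ioi r, a t * b t ≤
      (∫ t in Ioi r, a t ^ 2) ^ ((1:ℝ)/2) * (∫ t in Ioi r, b t ^ 2) ^ ((1:ℝ)/2) := by
    have hpq : Real.HolderConjugate 2 2 := Real.HolderConjugate.two_two
    have := integral_mul_le_Lp_mul_Lq_of_nonneg (μ := volume.restrict (Ioi r)) hpq
      (Filter.Eventually.of_forall fun t => mul_nonneg (Real.sqrt_nonneg _) (norm_nonneg _))
      (Filter.Eventually.of_forall fun t => mul_nonneg (Real.sqrt_nonneg _) (hwpos t))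
      ((hac.memLp_of_hasCompactSupport ha2).restrict _)
      ((hbc.memLp_of_hasCompactSupport hb2).restrict _)
    have hconv : ∀ x : ℝ, x ^ (2:ℝ) = x ^ (2:ℕ) := fun x => by
      rw [← Real.rpow_natCast x 2]; norm_num
    simp only [hconv] at this
    exact this
  have hmono : ∀ (g : ℝ → ℝ), Continuous g → HasCompactSupport g →
      ∫ t in Ioi r, g t ^ 2 ≤ ∫ t in Ioi (0:ℝ), g t ^ 2 := by
    intro g hgc hg2
    refine setIntegral_mono_set ((hgc.pow 2).integrable_of_hasCompactSupport
      (hg2.comp_left (g := fun s : ℝ => s ^ 2) (by simp) : HasCompactSupport (fun t => g t ^ 2))).integrableOn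
      (Filter.Eventually.of_forall fun t => by positivity)
      (HasSubset.Subset.eventuallyLE (Ioi_subset_Ioi hr.le))
  have haeq : ∫ t in Ioi (0:ℝ), a t ^ 2 = ∫ t in Ioi (0:ℝ), t ^ m * ‖u t‖ ^ 2 := by
    refine setIntegral_congr_fun measurableSet_Ioi fun t ht => ?_
    simp only [ha, mul_pow, Real.sq_sqrt (pow_nonneg (le_of_lt ht) m)]
  have hbeq : ∫ t in Ioi (0:ℝ), b t ^ 2 = ∫ t in Ioi (0:ℝ), t ^ m * w t ^ 2 := by
    refine setIntegral_congr_fun measurableSet_Ioi fun t ht => ?_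
    simp only [hb, mul_pow, Real.sq_sqrt (pow_nonneg (le_of_lt ht) m)]
  have hint2 : ∫ t in Ioi r, 2 * (a t * b t) = 2 * ∫ t in Ioi r, a t * b t :=
    integral_const_mul 2 _
  have hnn : ∀ (g : ℝ → ℝ), (0:ℝ) ≤ ∫ t in Ioi r, g t ^ 2 :=
    fun g => integral_nonneg fun t => by positivity
  calc F r ≤ ∫ t in Ioi r, 2 * (a t * b t) := hkey
    _ = 2 * ∫ t in Ioi r, a t * b t := hint2
    _ ≤ 2 * ((∫ t in Ioi r, a t ^ 2) ^ ((1:ℝ)/2) * (∫ t in Ioi r, b t ^ 2) ^ ((1:ℝ)/2)) := by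
        linarith [hCS]
    _ ≤ 2 * ((∫ t in Ioi (0:ℝ), a t ^ 2) ^ ((1:ℝ)/2) *
        (∫ t in Ioi (0:ℝ), b t ^ 2) ^ ((1:ℝ)/2)) := by
        have h1 := Real.rpow_le_rpow (hnn a) (hmono a hac ha2) (by norm_num : (0:ℝ) ≤ 1/2)
        have h2 := Real.rpow_le_rpow (hnn b) (hmono b hbc hb2) (by norm_num : (0:ℝ) ≤ 1/2)
        have := mul_le_mul h1 h2 (Real.rpow_nonneg (hnn b) _)
          (Real.rpow_nonneg (integral_nonneg fun t => by positivity) _)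
        linarith
    _ = 2 * ((∫ t in Ioi (0:ℝ), t ^ m * ‖u t‖ ^ 2) ^ ((1:ℝ)/2) *
        (∫ t in Ioi (0:ℝ), t ^ m * w t ^ 2) ^ ((1:ℝ)/2)) := by rw [haeq, hbeq]

lemma aux_polar (n : ℕ) (hn : 2 ≤ n) (U : ℝ → ℝ) :
    ∫ x : EuclideanSpace ℝ (Fin n), U ‖x‖ =
      ((n : ℝ) * (volume (Metric.ball (0 : EuclideanSpace ℝ (Fin n)) 1)).toReal) *
        ∫ t in Ioi (0:ℝ), t ^ (n - 1) * U t := by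
  haveI : Nontrivial (EuclideanSpace ℝ (Fin n)) := by
    refine nontrivial_of_ne (EuclideanSpace.single (⟨0, by omega⟩ : Fin n) (1:ℝ)) 0 ?_
    intro h
    have := congrArg norm h
    simp [EuclideanSpace.norm_single] at this
  rw [integral_fun_norm_addHaar volume U]
  simp only [finrank_euclideanSpace_fin, nsmul_eq_mul, smul_eq_mul, mul_assoc, measureReal_def]

/-- Strauss-type radial decay estimate. For `n ≥ 2` there is a constant
`C_n > 0` depending only on `n` such that every `C¹` compactly supported radial
`f : ℝⁿ → ℂ` satisfies `|f x|² ≤ C_n |x|^{-(n-1)} ‖f‖_{L²} ‖∇f‖_{L²}` for `x ≠ 0`;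
in particular if `‖f‖_{L²}, ‖∇f‖_{L²} ≤ R` then
`|f x| ≤ √C_n · R · |x|^{-(n-1)/2}` for `|x| ≥ 1`. -/
theorem stmt6 (n : ℕ) (hn : 2 ≤ n) :
    ∃ C > 0, ∀ f : EuclideanSpace ℝ (Fin n) → ℂ,
      ContDiff ℝ 1 f → HasCompactSupport f →
      (∀ x y : EuclideanSpace ℝ (Fin n), ‖x‖ = ‖y‖ → f x = f y) →
      (∀ x : EuclideanSpace ℝ (Fin n), x ≠ 0 →
        ‖f x‖ ^ 2 ≤ C * ‖x‖ ^ (-((n:ℝ) - 1)) *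
          ((∫ y, ‖f y‖ ^ 2) ^ ((1:ℝ)/2) * (∫ y, ‖fderiv ℝ f y‖ ^ 2) ^ ((1:ℝ)/2))) ∧
      (∀ R > 0, (∫ y, ‖f y‖ ^ 2) ^ ((1:ℝ)/2) ≤ R →
        (∫ y, ‖fderiv ℝ f y‖ ^ 2) ^ ((1:ℝ)/2) ≤ R →
        ∀ x : EuclideanSpace ℝ (Fin n), 1 ≤ ‖x‖ →
          ‖f x‖ ≤ Real.sqrt C * R * ‖x‖ ^ (-((n:ℝ) - 1)/2)) := by
  set c : ℝ := (n : ℝ) * (volume (Metric.ball (0 : EuclideanSpace ℝ (Fin n)) 1)).toReal with hcdef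
  have hc : 0 < c := by
    apply mul_pos (by positivity)
    refine ENNReal.toReal_pos (ne_of_gt (Metric.measure_ball_pos volume 0 one_pos)) ?_
    exact (measure_ball_lt_top).ne
  refine ⟨2 / c, by positivity, fun f hf hsupp hrad => ?_⟩
  -- setup
  set e₁ : EuclideanSpace ℝ (Fin n) := EuclideanSpace.single (⟨0, by omega⟩ : Fin n) (1:ℝ)
    with he₁def
  have he₁ : ‖e₁‖ = 1 := by simp [he₁def, EuclideanSpace.norm_single]
  have hsm : Isometry (fun t : ℝ => t • e₁) := by
    refine Isometry.of_dist_eq fun s t => ?_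
    rw [dist_eq_norm, dist_eq_norm, ← sub_smul, norm_smul, he₁]
    simp
  set u : ℝ → ℂ := fun t => f (t • e₁) with hu_def
  set w : ℝ → ℝ := fun t => ‖fderiv ℝ f (t • e₁)‖ with hw_def
  have hsmC : ContDiff ℝ 1 (fun t : ℝ => t • e₁) := contDiff_id.smul contDiff_const
  have hu : ContDiff ℝ 1 u := hf.comp hsmC
  have hu2 : HasCompactSupport u := hsupp.comp_isClosedEmbedding hsm.isClosedEmbedding
  set u' : ℝ → ℂ := fun t => fderiv ℝ f (t • e₁) e₁ with hu'_def
  have hu' : ∀ t, HasDerivAt u (u' t) t := by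
    intro t
    have h1 : HasDerivAt (fun s : ℝ => s • e₁) e₁ t := by
      simpa using (hasDerivAt_id t).smul_const e₁
    exact ((hf.differentiable one_ne_zero) (t • e₁)).hasFDerivAt.comp_hasDerivAt t h1
  have hu'w : ∀ t, ‖u' t‖ ≤ w t := by
    intro t
    calc ‖fderiv ℝ f (t • e₁) e₁‖ ≤ ‖fderiv ℝ f (t • e₁)‖ * ‖e₁‖ :=
          ContinuousLinearMap.le_opNorm _ _
      _ = w t := by rw [he₁, mul_one]
  have hwpos : ∀ t, 0 ≤ w t := fun t => norm_nonneg _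
  have hwc : Continuous w := ((hf.continuous_fderiv one_ne_zero).comp hsmC.continuous).norm
  have hw2 : HasCompactSupport w :=
    ((hsupp.fderiv ℝ).comp_isClosedEmbedding hsm.isClosedEmbedding).norm
  -- radial values
  have hfx : ∀ y : EuclideanSpace ℝ (Fin n), f y = u ‖y‖ := by
    intro y
    apply hrad
    rw [norm_smul, he₁]
    simp [abs_of_nonneg (norm_nonneg y)]
  have hgx : ∀ y : EuclideanSpace ℝ (Fin n), ‖fderiv ℝ f y‖ = w ‖y‖ := by
    intro y
    have hny : ‖y‖ = ‖(‖y‖ : ℝ) • e₁‖ := by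
      rw [norm_smul, he₁]; simp [abs_of_nonneg (norm_nonneg y)]
    exact le_antisymm (aux_fderiv_le f hrad hny) (aux_fderiv_le f hrad hny.symm)
  -- polar
  set A : ℝ := ∫ y : EuclideanSpace ℝ (Fin n), ‖f y‖ ^ 2 with hAdef
  set B : ℝ := ∫ y : EuclideanSpace ℝ (Fin n), ‖fderiv ℝ f y‖ ^ 2 with hBdef
  have hA0 : 0 ≤ A := integral_nonneg fun y => by positivity
  have hB0 : 0 ≤ B := integral_nonneg fun y => by positivity
  have hApol : A = c * ∫ t in Ioi (0:ℝ), t ^ (n-1) * ‖u t‖ ^ 2 := by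
    have h := aux_polar n hn (fun s => ‖u s‖ ^ 2)
    rw [hAdef, integral_congr_ae (Filter.Eventually.of_forall
      (fun y : EuclideanSpace ℝ (Fin n) => by rw [hfx y] :
        ∀ y : EuclideanSpace ℝ (Fin n), ‖f y‖ ^ 2 = ‖u ‖y‖‖ ^ 2))]
    exact h
  have hBpol : B = c * ∫ t in Ioi (0:ℝ), t ^ (n-1) * w t ^ 2 := by
    have h := aux_polar n hn (fun s => w s ^ 2)
    rw [hBdef, integral_congr_ae (Filter.Eventually.of_forall
      (fun y : EuclideanSpace ℝ (Fin n) => by rw [hgx y] :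
        ∀ y : EuclideanSpace ℝ (Fin n), ‖fderiv ℝ f y‖ ^ 2 = w ‖y‖ ^ 2))]
    exact h
  have hIu : ∫ t in Ioi (0:ℝ), t ^ (n-1) * ‖u t‖ ^ 2 = A / c := by
    rw [hApol]; field_simp
  have hIw : ∫ t in Ioi (0:ℝ), t ^ (n-1) * w t ^ 2 = B / c := by
    rw [hBpol]; field_simp
  -- part 1
  have part1 : ∀ x : EuclideanSpace ℝ (Fin n), x ≠ 0 →
      ‖f x‖ ^ 2 ≤ (2/c) * ‖x‖ ^ (-((n:ℝ) - 1)) *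
        (A ^ ((1:ℝ)/2) * B ^ ((1:ℝ)/2)) := by
    intro x hx
    have hr : 0 < ‖x‖ := norm_pos_iff.mpr hx
    have hmain := aux_oneD (m := n - 1) u w hwpos hu hu2 u' hu' hu'w hwc hw2 hr
    rw [hIu, hIw] at hmain
    have hdiv : (A / c) ^ ((1:ℝ)/2) * (B / c) ^ ((1:ℝ)/2)
        = (A ^ ((1:ℝ)/2) * B ^ ((1:ℝ)/2)) / c := by
      rw [Real.div_rpow hA0 hc.le, Real.div_rpow hB0 hc.le]
      rw [div_mul_div_comm, ← Real.rpow_add hc]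
      norm_num
    rw [hdiv] at hmain
    -- hmain : ‖x‖ ^ (n-1) * ‖u ‖x‖‖ ^ 2 ≤ 2 * ((A^(1/2) * B^(1/2)) / c)
    have hfu : ‖f x‖ = ‖u ‖x‖‖ := by rw [hfx x]
    have hpow : ‖x‖ ^ (-((n:ℝ) - 1)) = (‖x‖ ^ (n-1 : ℕ))⁻¹ := by
      rw [Real.rpow_neg hr.le, ← Real.rpow_natCast ‖x‖ (n-1)]
      congr 2
      push_cast [Nat.cast_sub (by omega : 1 ≤ n)]
      ring
    rw [hfu, hpow]
    have hrp : (0:ℝ) < ‖x‖ ^ (n-1 : ℕ) := pow_pos hr _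
    have h6 : ‖u ‖x‖‖ ^ 2 ≤ (2 * ((A ^ ((1:ℝ)/2) * B ^ ((1:ℝ)/2)) / c)) / ‖x‖ ^ (n-1 : ℕ) := by
      rw [le_div_iff₀ hrp, mul_comm]
      exact hmain
    calc ‖u ‖x‖‖ ^ 2 ≤ (2 * ((A ^ ((1:ℝ)/2) * B ^ ((1:ℝ)/2)) / c)) / ‖x‖ ^ (n-1 : ℕ) := h6
      _ = 2 / c * (‖x‖ ^ (n-1 : ℕ))⁻¹ * (A ^ ((1:ℝ)/2) * B ^ ((1:ℝ)/2)) := by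
          field_simp
  refine ⟨fun x hx => part1 x hx, ?_⟩
  -- part 2
  intro R hR hAR hBR x hx
  have hx0 : x ≠ 0 := by
    intro h
    rw [h] at hx
    simp at hx
    linarith
  have h1 := part1 x hx0
  have hAB : A ^ ((1:ℝ)/2) * B ^ ((1:ℝ)/2) ≤ R * R :=
    mul_le_mul hAR hBR (Real.rpow_nonneg hB0 _) hR.le
  have hcx : 0 ≤ (2/c) * ‖x‖ ^ (-((n:ℝ) - 1)) := by positivity
  have h2 : ‖f x‖ ^ 2 ≤ (2/c) * ‖x‖ ^ (-((n:ℝ) - 1)) * (R * R) :=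
    le_trans h1 (mul_le_mul_of_nonneg_left hAB hcx)
  have h3 : ‖f x‖ = Real.sqrt (‖f x‖ ^ 2) := (Real.sqrt_sq (norm_nonneg _)).symm
  rw [h3]
  calc Real.sqrt (‖f x‖ ^ 2) ≤ Real.sqrt ((2/c) * ‖x‖ ^ (-((n:ℝ) - 1)) * (R * R)) :=
        Real.sqrt_le_sqrt h2
    _ = Real.sqrt (2/c) * R * ‖x‖ ^ (-((n:ℝ) - 1)/2) := by
        have hsq : Real.sqrt (‖x‖ ^ (-((n:ℝ) - 1))) = ‖x‖ ^ (-((n:ℝ) - 1)/2) := by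
          rw [Real.sqrt_eq_rpow, ← Real.rpow_mul (norm_nonneg x)]
          congr 1
          ring
        rw [Real.sqrt_mul (by positivity) (R * R),
          Real.sqrt_mul (by positivity) (‖x‖ ^ (-((n:ℝ) - 1))),
          Real.sqrt_mul_self hR.le, hsq]
        ring
end
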